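/- If there exists a mixed Steiner system MS(t, t+1, Z_{g+1}^n × Z_{m+1}) (equivalently a GDD(t, t+1, ng+m) of type g^n m^1 with minimum Hamming distance 3 as a code), then n ≥ max{m + t − 1, g + t − 1}. -/

import Mathlib

open Finset

lemma auxA_card {α β : Type*} [DecidableEq β] (A : Finset α) (S : Finset β)
    (P : α → β → Prop) (hex : ∀ a ∈ A, ∃ b ∈ S, P a b)
    (hinj : ∀ a₁ ∈ A, ∀ a₂ ∈ A, ∀ b, P a₁ b → P a₂ b → a₁ = a₂) :
    A.card ≤ S.card := by
  classical
  choose f hfS hfP using hex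
  have := Finset.card_le_card_of_injOn (fun x : {a // a ∈ A} => f x.1 x.2)
    (s := A.attach) (t := S) (fun x _ => hfS x.1 x.2) ?_
  · simpa using this
  · intro x _ y _ hxy
    have h1 := hfP x.1 x.2
    have h2 := hfP y.1 y.2
    simp only at hxy
    rw [hxy] at h1
    exact Subtype.ext (hinj x.1 x.2 y.1 y.2 _ h1 h2)

lemma auxA_filter_lt (n k : ℕ) (hk : k ≤ n) :
    (Finset.univ.filter fun p : Fin n => (p : ℕ) < k).card = k := by
  have h : ∀ x ∈ Finset.range k, x < n := fun x hx => lt_of_lt_of_le (Finset.mem_range.mp hx) hk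
  have : (Finset.univ.filter fun p : Fin n => (p : ℕ) < k) = (Finset.range k).attachFin h := by
    ext p; simp [Finset.mem_attachFin]
  rw [this, Finset.card_attachFin, Finset.card_range]

lemma auxA_dist_one {n : ℕ} {α : Type*} [DecidableEq α] {x y : Fin n → α}
    (h : hammingDist x y = 1) :
    ∃ p, x p ≠ y p ∧ ∀ j, j ≠ p → x j = y j := by
  rw [hammingDist, Finset.card_eq_one] at h
  obtain ⟨p, hp⟩ := h
  refine ⟨p, ?_, ?_⟩
  · have : p ∈ ({p} : Finset (Fin n)) := Finset.mem_singleton_self p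
    rw [← hp] at this; simpa using this
  · intro j hj
    by_contra hne
    have : j ∈ Finset.univ.filter fun i => x i ≠ y i := by simpa using hne
    rw [hp] at this; exact hj (Finset.mem_singleton.mp this)

lemma auxA_norm_le {n : ℕ} {α : Type*} [DecidableEq α] [Zero α] {x y : Fin n → α} {p : Fin n}
    (hagree : ∀ j, j ≠ p → x j = y j) (hp : x p ≠ 0) :
    hammingNorm y ≤ hammingNorm x := by
  apply Finset.card_le_card
  intro j hj
  simp only [Finset.mem_filter, Finset.mem_univ, true_and] at *
  by_cases hjp : j = p
  · subst hjp; exact hp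
  · rw [hagree j hjp]; exact hj

lemma auxA_dist_le {n : ℕ} {α : Type*} [DecidableEq α] {x y : Fin n → α} (s : Finset (Fin n))
    (hagree : ∀ j, j ∉ s → x j = y j) : hammingDist x y ≤ s.card := by
  apply Finset.card_le_card
  intro j hj
  simp only [Finset.mem_filter, Finset.mem_univ, true_and] at hj
  by_contra hjs
  exact hj (hagree j hjs)


/-- If there exists a mixed Steiner system `MS(t, t+1, Z_{g+1}ⁿ × Z_{m+1})` — a code of
weight-`(t+1)` words over `Z_{g+1}ⁿ × Z_{m+1}` in which every weight-`t` word is within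
Hamming distance 1 of exactly one codeword and whose minimum Hamming distance is 3
(equivalently a `GDD(t, t+1, ng+m)` of type `gⁿ m¹` with minimum distance 3) —
then `n ≥ max {m + t - 1, g + t - 1}`.  (`t - 1 ≤ n` is the implicit nondegeneracy
condition that transverse `t`-subsets of the point set exist.) -/
theorem stmt10 (n t g m : ℕ) (ht : 1 ≤ t) (hg : 1 ≤ g) (hm : 1 ≤ m) (hn : t - 1 ≤ n)
    (h : ∃ C : Set ((Fin n → ZMod (g + 1)) × ZMod (m + 1)),
      (∀ c ∈ C, hammingNorm c.1 + (if c.2 = 0 then 0 else 1) = t + 1) ∧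
      (∀ x : (Fin n → ZMod (g + 1)) × ZMod (m + 1),
        hammingNorm x.1 + (if x.2 = 0 then 0 else 1) = t →
        ∃! c, c ∈ C ∧ hammingDist x.1 c.1 + (if x.2 = c.2 then 0 else 1) = 1) ∧
      (∀ c₁ ∈ C, ∀ c₂ ∈ C, c₁ ≠ c₂ →
        3 ≤ hammingDist c₁.1 c₂.1 + (if c₁.2 = c₂.2 then 0 else 1))) :
    max (m + t - 1) (g + t - 1) ≤ n := by
  classical
  obtain ⟨C, h1, h2, h3⟩ := h
  haveI : Fact (1 < g + 1) := ⟨by omega⟩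
  haveI : Fact (1 < m + 1) := ⟨by omega⟩
  -- base word for the m-bound
  set x : Fin n → ZMod (g + 1) := fun j => if (j : ℕ) < t - 1 then 1 else 0 with hxdef
  have hxval : ∀ j : Fin n, (j : ℕ) < t - 1 → x j = 1 := by intro j hj; simp [hxdef, hj]
  have hxval' : ∀ j : Fin n, ¬ (j : ℕ) < t - 1 → x j = 0 := by intro j hj; simp [hxdef, hj]
  have hxnorm : hammingNorm x = t - 1 := by
    have : (Finset.univ.filter fun j : Fin n => x j ≠ 0)
        = Finset.univ.filter fun j : Fin n => (j : ℕ) < t - 1 := by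
      ext j
      by_cases hj : (j : ℕ) < t - 1 <;> simp [hxdef, hj, one_ne_zero] <;> omega
    rw [hammingNorm, this, auxA_filter_lt n (t-1) hn]
  -- key lemma for the m-bound
  have key_m : ∀ a : ZMod (m + 1), a ≠ 0 →
      ∃ p ∈ Finset.univ.filter fun p : Fin n => ¬ (p : ℕ) < t - 1,
        ∃ c, c ∈ C ∧ c.2 = a ∧ ∀ j, j ≠ p → c.1 j = x j := by
    intro a ha
    have hw : hammingNorm x + (if a = 0 then 0 else 1) = t := by
      rw [hxnorm]; simp [ha]; omega
    obtain ⟨c, ⟨hcC, hcd⟩, -⟩ := h2 (x, a) hw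
    simp only at hcd
    by_cases hac : a = c.2
    · -- the codeword extends x in a Fin n coordinate
      rw [if_pos hac] at hcd
      have hdist : hammingDist x c.1 = 1 := by omega
      obtain ⟨p, hpne, hpagree⟩ := auxA_dist_one hdist
      have hcnorm : hammingNorm c.1 = t := by
        have := h1 c hcC
        rw [if_neg (by rw [← hac]; exact ha)] at this
        omega
      have hxp : x p = 0 := by
        by_contra hxp
        have := auxA_norm_le (x := x) (y := c.1) hpagree hxp
        omega
      have hplt : ¬ (p : ℕ) < t - 1 := fun hlt => by
        rw [hxval p hlt] at hxp; exact one_ne_zero hxp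
      exact ⟨p, Finset.mem_filter.mpr ⟨Finset.mem_univ p, hplt⟩, c, hcC, hac.symm, fun j hj => (hpagree j hj).symm⟩
    · -- impossible: codeword equal to x in first component
      rw [if_neg hac] at hcd
      have hdist : hammingDist x c.1 = 0 := by omega
      have hxc : x = c.1 := hammingDist_eq_zero.mp hdist
      have := h1 c hcC
      rw [← hxc, hxnorm] at this
      have : (if c.2 = 0 then 0 else 1) ≤ 1 := by split <;> omega
      omega
  have hm2 : m + t - 1 ≤ n := by
    have hcard := auxA_card (Finset.univ.filter fun a : ZMod (m + 1) => a ≠ 0)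
      (Finset.univ.filter fun p : Fin n => ¬ (p : ℕ) < t - 1)
      (fun a p => ∃ c, c ∈ C ∧ c.2 = a ∧ ∀ j, j ≠ p → c.1 j = x j)
      (fun a ha => key_m a (by simpa using ha)) ?_
    · have hA : (Finset.univ.filter fun a : ZMod (m + 1) => a ≠ 0).card = m := by
        rw [Finset.filter_ne', Finset.card_erase_of_mem (Finset.mem_univ 0),
          Finset.card_univ, ZMod.card]
        simp
      have hS : (Finset.univ.filter fun p : Fin n => ¬ (p : ℕ) < t - 1).card = n - (t - 1) := by
        rw [Finset.filter_not, Finset.card_sdiff_of_subset (Finset.filter_subset _ _),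
          Finset.card_univ, Fintype.card_fin, auxA_filter_lt n (t-1) hn]
      rw [hA, hS] at hcard
      omega
    · rintro a₁ _ a₂ _ p ⟨c₁, hc₁C, hc₁a, hc₁agree⟩ ⟨c₂, hc₂C, hc₂a, hc₂agree⟩
      by_contra hne
      have hcc : c₁ ≠ c₂ := fun hcc => hne (by rw [← hc₁a, ← hc₂a, hcc])
      have h3' := h3 c₁ hc₁C c₂ hc₂C hcc
      have hd : hammingDist c₁.1 c₂.1 ≤ 1 := by
        have := auxA_dist_le ({p} : Finset (Fin n))
          (x := c₁.1) (y := c₂.1)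
          (fun j hj => by
            rw [hc₁agree j (by simpa using hj), hc₂agree j (by simpa using hj)])
        simpa using this
      have : (if c₁.2 = c₂.2 then 0 else 1) ≤ 1 := by split <;> omega
      omega
  -- g-bound
  have hn1 : 0 < n := by omega
  have hin : t - 2 < n := by omega
  set i : Fin n := ⟨t - 2, hin⟩ with hidef
  have hiv : (i : ℕ) = t - 2 := rfl
  set b : ZMod (m + 1) := if t = 1 then 0 else 1 with hbdef
  have hb1 : t = 1 → b = 0 := fun e => by simp [hbdef, e]
  have hbne : t ≠ 1 → b ≠ 0 := fun e => by simp [hbdef, e]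
  set z : ZMod (g + 1) → Fin n → ZMod (g + 1) :=
    fun a j => if j = i then a else if (j : ℕ) < t - 2 then 1 else 0 with hzdef
  have hzi : ∀ a, z a i = a := fun a => by simp [hzdef]
  have hzoff : ∀ a j, j ≠ i → z a j = if (j : ℕ) < t - 2 then 1 else 0 :=
    fun a j hj => by simp [hzdef, hj]
  have hznorm : ∀ a : ZMod (g + 1), a ≠ 0 → hammingNorm (z a) = (t - 2) + 1 := by
    intro a ha
    have hfe : (Finset.univ.filter fun j : Fin n => z a j ≠ 0)
        = insert i (Finset.univ.filter fun j : Fin n => (j : ℕ) < t - 2) := by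
      ext j
      by_cases hji : j = i
      · subst hji; simp [hzi, ha]
      · rw [Finset.mem_insert]
        simp only [Finset.mem_filter, Finset.mem_univ, true_and]
        rw [hzoff a j hji]
        by_cases hj : (j : ℕ) < t - 2 <;> simp [hj, hji, one_ne_zero]
    rw [hammingNorm, hfe, Finset.card_insert_of_notMem (by simp [hiv]),
      auxA_filter_lt n (t - 2) (by omega)]
  set Sg : Finset (Fin n) := (Finset.univ.filter fun p : Fin n => ¬ (p : ℕ) < t - 2).erase i
    with hSgdef
  set Tg : Finset (Option (Fin n)) := insert none (Sg.image some) with hTgdef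
  have key_g : ∀ a : ZMod (g + 1), a ≠ 0 →
      ∃ o ∈ Tg, ((o = none ∧ ∃ c, c ∈ C ∧ c.2 ≠ b ∧ ∀ j, c.1 j = z a j) ∨
          (∃ p, o = some p ∧ p ≠ i ∧ ∃ c, c ∈ C ∧ c.2 = b ∧ ∀ j, j ≠ p → c.1 j = z a j)) ∧
        (t ≠ 1 → ∃ p ∈ Sg,
          (∃ p', some p = some p' ∧ p' ≠ i ∧
            ∃ c, c ∈ C ∧ c.2 = b ∧ ∀ j, j ≠ p' → c.1 j = z a j)) := by
    intro a ha
    have hw : hammingNorm (z a) + (if b = 0 then 0 else 1) = t := by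
      rw [hznorm a ha]
      by_cases ht1 : t = 1
      · rw [if_pos (hb1 ht1)]; omega
      · rw [if_neg (hbne ht1)]; omega
    obtain ⟨c, ⟨hcC, hcd⟩, -⟩ := h2 (z a, b) hw
    simp only at hcd
    by_cases hbc : b = c.2
    · rw [if_pos hbc] at hcd
      have hdist : hammingDist (z a) c.1 = 1 := by omega
      obtain ⟨p, hpne, hpagree⟩ := auxA_dist_one hdist
      have hzp : z a p = 0 := by
        by_contra hzp
        have hle := auxA_norm_le hpagree hzp
        rw [hznorm a ha] at hle
        have h1c := h1 c hcC
        by_cases ht1 : t = 1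
        · rw [if_pos (by rw [← hbc]; exact hb1 ht1)] at h1c; omega
        · rw [if_neg (by rw [← hbc]; exact hbne ht1)] at h1c; omega
      have hpi : p ≠ i := fun e => ha (by rw [e, hzi] at hzp; exact hzp)
      have hplt : ¬ (p : ℕ) < t - 2 := by
        intro hlt
        rw [hzoff a p hpi, if_pos hlt] at hzp
        exact one_ne_zero hzp
      have hpS : p ∈ Sg := Finset.mem_erase.mpr
        ⟨hpi, Finset.mem_filter.mpr ⟨Finset.mem_univ p, hplt⟩⟩
      refine ⟨some p, Finset.mem_insert_of_mem (Finset.mem_image_of_mem some hpS),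
        Or.inr ⟨p, rfl, hpi, c, hcC, hbc.symm, fun j hj => (hpagree j hj).symm⟩,
        fun _ => ⟨p, hpS, p, rfl, hpi, c, hcC, hbc.symm, fun j hj => (hpagree j hj).symm⟩⟩
    · rw [if_neg hbc] at hcd
      have hdist : hammingDist (z a) c.1 = 0 := by omega
      have hzc : z a = c.1 := hammingDist_eq_zero.mp hdist
      have h1c := h1 c hcC
      rw [← hzc, hznorm a ha] at h1c
      have hite : (if c.2 = 0 then 0 else 1) ≤ 1 := by split <;> omega
      have htt : t = 1 := by omega
      exact ⟨none, Finset.mem_insert_self _ _,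
        Or.inl ⟨rfl, c, hcC, fun e => hbc e.symm, fun j => (congrFun hzc j).symm⟩,
        fun h1t => absurd htt h1t⟩
  have inj_g : ∀ a₁ : ZMod (g + 1), a₁ ≠ 0 → ∀ a₂ : ZMod (g + 1), a₂ ≠ 0 →
      ∀ o : Option (Fin n),
      ((o = none ∧ ∃ c, c ∈ C ∧ c.2 ≠ b ∧ ∀ j, c.1 j = z a₁ j) ∨
        (∃ p, o = some p ∧ p ≠ i ∧ ∃ c, c ∈ C ∧ c.2 = b ∧ ∀ j, j ≠ p → c.1 j = z a₁ j)) →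
      ((o = none ∧ ∃ c, c ∈ C ∧ c.2 ≠ b ∧ ∀ j, c.1 j = z a₂ j) ∨
        (∃ p, o = some p ∧ p ≠ i ∧ ∃ c, c ∈ C ∧ c.2 = b ∧ ∀ j, j ≠ p → c.1 j = z a₂ j)) →
      a₁ = a₂ := by
    intro a₁ ha₁ a₂ ha₂ o hQ₁ hQ₂
    by_contra hne
    rcases hQ₁ with ⟨ho₁, c₁, hc₁C, hc₁b, hc₁agree⟩ | ⟨p₁, ho₁, hp₁i, c₁, hc₁C, hc₁b, hc₁agree⟩ <;>
      rcases hQ₂ with ⟨ho₂, c₂, hc₂C, hc₂b, hc₂agree⟩ | ⟨p₂, ho₂, hp₂i, c₂, hc₂C, hc₂b, hc₂agree⟩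
    · -- both none
      have hcc : c₁ ≠ c₂ := by
        intro e
        apply hne
        have := congrFun (congrArg Prod.fst e) i
        rw [hc₁agree i, hc₂agree i, hzi, hzi] at this
        exact this
      have h3' := h3 c₁ hc₁C c₂ hc₂C hcc
      have hd : hammingDist c₁.1 c₂.1 ≤ 1 := by
        have := auxA_dist_le ({i} : Finset (Fin n)) (x := c₁.1) (y := c₂.1) (fun j hj => by
          have hji : j ≠ i := by simpa using hj
          rw [hc₁agree j, hc₂agree j, hzoff a₁ j hji, hzoff a₂ j hji])
        simpa using this
      have : (if c₁.2 = c₂.2 then 0 else 1) ≤ 1 := by split <;> omega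
      omega
    · rw [ho₁] at ho₂; exact Option.some_ne_none _ ho₂.symm
    · rw [ho₂] at ho₁; exact Option.some_ne_none _ ho₁.symm
    · -- both some
      rw [ho₁] at ho₂
      have hpp : p₁ = p₂ := Option.some.inj ho₂
      subst hpp
      have hcc : c₁ ≠ c₂ := by
        intro e
        apply hne
        have := congrFun (congrArg Prod.fst e) i
        rw [hc₁agree i (Ne.symm hp₁i), hc₂agree i (Ne.symm hp₂i)] at this
        · rw [hzi, hzi] at this; exact this
      have h3' := h3 c₁ hc₁C c₂ hc₂C hcc
      have hd : hammingDist c₁.1 c₂.1 ≤ 2 := by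
        have hsub := auxA_dist_le ({i, p₁} : Finset (Fin n)) (x := c₁.1) (y := c₂.1)
          (fun j hj => by
            have hji : j ≠ i := by simp at hj; tauto
            have hjp : j ≠ p₁ := by simp at hj; tauto
            rw [hc₁agree j hjp, hc₂agree j hjp, hzoff a₁ j hji, hzoff a₂ j hji])
        calc hammingDist c₁.1 c₂.1 ≤ ({i, p₁} : Finset (Fin n)).card := hsub
          _ ≤ 2 := (Finset.card_insert_le _ _).trans (by simp)
      rw [hc₁b, hc₂b, if_pos rfl] at h3'
      omega
  have hAg : (Finset.univ.filter fun a : ZMod (g + 1) => a ≠ 0).card = g := by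
    rw [Finset.filter_ne', Finset.card_erase_of_mem (Finset.mem_univ 0),
      Finset.card_univ, ZMod.card]
    simp
  have hiS : i ∈ Finset.univ.filter fun p : Fin n => ¬ (p : ℕ) < t - 2 :=
    Finset.mem_filter.mpr ⟨Finset.mem_univ i, by simp [hiv]⟩
  have hSgcard : Sg.card = n - (t - 2) - 1 := by
    rw [hSgdef, Finset.card_erase_of_mem hiS, Finset.filter_not,
      Finset.card_sdiff_of_subset (Finset.filter_subset _ _), Finset.card_univ, Fintype.card_fin,
      auxA_filter_lt n (t - 2) (by omega)]
  have hg2 : g + t - 1 ≤ n := by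
    by_cases ht1 : t = 1
    · have hcard := auxA_card (Finset.univ.filter fun a : ZMod (g + 1) => a ≠ 0) Tg
        (fun a o => ((o = none ∧ ∃ c, c ∈ C ∧ c.2 ≠ b ∧ ∀ j, c.1 j = z a j) ∨
          (∃ p, o = some p ∧ p ≠ i ∧ ∃ c, c ∈ C ∧ c.2 = b ∧ ∀ j, j ≠ p → c.1 j = z a j)))
        (fun a ha => by
          obtain ⟨o, hoT, hQ, -⟩ := key_g a (by simpa using ha)
          exact ⟨o, hoT, hQ⟩)
        (fun a₁ ha₁ a₂ ha₂ o => inj_g a₁ (by simpa using ha₁) a₂ (by simpa using ha₂) o)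
      have hTgcard : Tg.card = Sg.card + 1 := by
        rw [hTgdef, Finset.card_insert_of_notMem (by simp), Finset.card_image_of_injective _
          (Option.some_injective _)]
      rw [hAg, hTgcard, hSgcard] at hcard
      omega
    · have hcard := auxA_card (Finset.univ.filter fun a : ZMod (g + 1) => a ≠ 0) Sg
        (fun a p => (∃ p', some p = some p' ∧ p' ≠ i ∧
          ∃ c, c ∈ C ∧ c.2 = b ∧ ∀ j, j ≠ p' → c.1 j = z a j))
        (fun a ha => by
          obtain ⟨o, hoT, hQ, hsome⟩ := key_g a (by simpa using ha)
          exact hsome ht1)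
        (fun a₁ ha₁ a₂ ha₂ p hP₁ hP₂ =>
          inj_g a₁ (by simpa using ha₁) a₂ (by simpa using ha₂) (some p)
            (Or.inr hP₁) (Or.inr hP₂))
      rw [hAg, hSgcard] at hcard
      omega
  exact max_le hm2 hg2
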